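/- Triangle counting via degree orientation is worst-case optimal: orienting the edges of an undirected graph with IN edges by the degree order and, for each oriented edge (u,v), intersecting the out-neighborhoods of u and v (taking time proportional to the smaller out-neighborhood) counts all triangles in total time O(IN^{3/2}). -/

import Mathlib

open scoped Classical

/-- The degree-then-id strict total order used for orienting edges:
`u ≺ v` iff `deg u < deg v`, or `deg u = deg v` and `u < v`. -/
noncomputable def DegOrder {V : Type*} [Fintype V] [LinearOrder V]
    (G : SimpleGraph V) (u v : V) : Prop :=
  G.degree u < G.degree v ∨ (G.degree u = G.degree v ∧ u < v)

/-- Out-neighbourhood size of `u` in the degree orientation of `G`. -/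
noncomputable def outDeg {V : Type*} [Fintype V] [LinearOrder V]
    (G : SimpleGraph V) (u : V) : ℕ :=
  {v : V | G.Adj u v ∧ DegOrder G u v}.ncard

section Aux

variable {V : Type*} [Fintype V] [LinearOrder V] {G : SimpleGraph V}

lemma degOrder_irrefl (u : V) : ¬ DegOrder G u u := by
  simp [DegOrder]

lemma degOrder_asymm {u v : V} (h : DegOrder G u v) : ¬ DegOrder G v u := by
  rcases h with h | ⟨h1, h2⟩ <;> rintro (h' | ⟨h1', h2'⟩)
  · omega
  · omega
  · omega
  · exact absurd (h2.trans h2') (lt_irrefl _)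

lemma degOrder_trans {u v w : V} (h : DegOrder G u v) (h' : DegOrder G v w) :
    DegOrder G u w := by
  rcases h with h | ⟨h1, h2⟩ <;> rcases h' with h' | ⟨h1', h2'⟩
  · exact Or.inl (h.trans h')
  · exact Or.inl (h1' ▸ h)
  · exact Or.inl (h1 ▸ h')
  · exact Or.inr ⟨h1.trans h1', h2.trans h2'⟩

lemma degOrder_total (G : SimpleGraph V) {u v : V} (h : u ≠ v) : DegOrder G u v ∨ DegOrder G v u := by
  rcases lt_trichotomy (G.degree u) (G.degree v) with hd | hd | hd
  · exact Or.inl (Or.inl hd)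
  · rcases h.lt_or_gt with h' | h'
    · exact Or.inl (Or.inr ⟨hd, h'⟩)
    · exact Or.inr (Or.inr ⟨hd.symm, h'⟩)
  · exact Or.inr (Or.inl hd)

lemma degOrder_ne {u v : V} (h : DegOrder G u v) : u ≠ v := by
  rintro rfl; exact degOrder_irrefl (G := G) u h

noncomputable def outFinset (G : SimpleGraph V) (u : V) : Finset V :=
  Finset.univ.filter (fun v => G.Adj u v ∧ DegOrder G u v)

lemma outDeg_eq_card (u : V) : outDeg G u = (outFinset G u).card := by
  rw [outDeg, outFinset]
  rw [show {v : V | G.Adj u v ∧ DegOrder G u v} =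
      ↑(Finset.univ.filter (fun v => G.Adj u v ∧ DegOrder G u v)) by
    ext v; simp]
  exact Set.ncard_coe_finset _

lemma outDeg_sq_le (u : V) : outDeg G u ^ 2 ≤ 2 * G.edgeFinset.card := by
  classical
  set S := outFinset G u with hS
  have hsub : S ⊆ G.neighborFinset u := by
    intro v hv
    simp only [hS, outFinset, Finset.mem_filter] at hv
    simpa using hv.2.1
  have hcard : S.card ≤ G.degree u := by
    rw [← SimpleGraph.card_neighborFinset_eq_degree]
    exact Finset.card_le_card hsub
  have hdeg : ∀ v ∈ S, S.card ≤ G.degree v := by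
    intro v hv
    simp only [hS, outFinset, Finset.mem_filter] at hv
    rcases hv.2.2 with h | ⟨h, _⟩
    · omega
    · omega
  calc outDeg G u ^ 2 = ∑ _v ∈ S, S.card := by
        rw [outDeg_eq_card, Finset.sum_const, smul_eq_mul, sq]
    _ ≤ ∑ v ∈ S, G.degree v := Finset.sum_le_sum hdeg
    _ ≤ ∑ v : V, G.degree v := Finset.sum_le_sum_of_subset (Finset.subset_univ S)
    _ = 2 * G.edgeFinset.card := G.sum_degrees_eq_twice_card_edges

lemma card_oriented_edges :
    (Finset.univ.filter
      (fun p : V × V => G.Adj p.1 p.2 ∧ DegOrder G p.1 p.2)).card =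
      G.edgeFinset.card := by
  classical
  apply Finset.card_bij (fun p _ => s(p.1, p.2))
  · intro p hp
    simp only [Finset.mem_filter] at hp
    simpa [SimpleGraph.mem_edgeFinset] using hp.2.1
  · rintro ⟨a, b⟩ h1 ⟨c, d⟩ h2 he
    simp only [Finset.mem_filter] at h1 h2
    rw [Sym2.mk_eq_mk_iff] at he
    rcases he with he | he
    · exact he
    · simp only [Prod.swap_prod_mk, Prod.mk.injEq] at he
      exfalso
      exact degOrder_asymm h1.2.2 (he.1 ▸ he.2 ▸ h2.2.2)
  · intro e he
    rw [SimpleGraph.mem_edgeFinset] at he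
    induction e with
    | _ a b =>
      have hab : G.Adj a b := he
      rcases degOrder_total G hab.ne with h | h
      · exact ⟨(a, b), by simp [hab, h], rfl⟩
      · exact ⟨(b, a), by simp [hab.symm, h], Sym2.eq_swap⟩

lemma triple_unique {a b c a' b' c' : V}
    (hab : DegOrder G a b) (hbc : DegOrder G b c)
    (hab' : DegOrder G a' b') (hbc' : DegOrder G b' c')
    (h : ({a, b, c} : Finset V) = {a', b', c'}) : a = a' ∧ b = b' ∧ c = c' := by
  have hac := degOrder_trans hab hbc
  have hac' := degOrder_trans hab' hbc'
  have min1 : ∀ x ∈ ({a, b, c} : Finset V), x = a ∨ DegOrder G a x := by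
    intro x hx
    simp only [Finset.mem_insert, Finset.mem_singleton] at hx
    rcases hx with rfl | rfl | rfl
    · exact Or.inl rfl
    · exact Or.inr hab
    · exact Or.inr hac
  have min1' : ∀ x ∈ ({a', b', c'} : Finset V), x = a' ∨ DegOrder G a' x := by
    intro x hx
    simp only [Finset.mem_insert, Finset.mem_singleton] at hx
    rcases hx with rfl | rfl | rfl
    · exact Or.inl rfl
    · exact Or.inr hab'
    · exact Or.inr hac'
  have haa : a = a' := by
    have h1 : a ∈ ({a', b', c'} : Finset V) := h ▸ (by simp)
    have h2 : a' ∈ ({a, b, c} : Finset V) := h ▸ (by simp)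
    rcases min1' a h1 with h' | h'
    · exact h'
    rcases min1 a' h2 with h'' | h''
    · exact h''.symm
    exact absurd h'' (degOrder_asymm h')
  have max1 : ∀ x ∈ ({a, b, c} : Finset V), x = c ∨ DegOrder G x c := by
    intro x hx
    simp only [Finset.mem_insert, Finset.mem_singleton] at hx
    rcases hx with rfl | rfl | rfl
    · exact Or.inr hac
    · exact Or.inr hbc
    · exact Or.inl rfl
  have max1' : ∀ x ∈ ({a', b', c'} : Finset V), x = c' ∨ DegOrder G x c' := by
    intro x hx
    simp only [Finset.mem_insert, Finset.mem_singleton] at hx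
    rcases hx with rfl | rfl | rfl
    · exact Or.inr hac'
    · exact Or.inr hbc'
    · exact Or.inl rfl
  have hcc : c = c' := by
    have h1 : c ∈ ({a', b', c'} : Finset V) := h ▸ (by simp)
    have h2 : c' ∈ ({a, b, c} : Finset V) := h ▸ (by simp)
    rcases max1' c h1 with h' | h'
    · exact h'
    rcases max1 c' h2 with h'' | h''
    · exact h''.symm
    exact absurd h'' (degOrder_asymm h')
  refine ⟨haa, ?_, hcc⟩
  have h1 : b ∈ ({a', b', c'} : Finset V) := h ▸ (by simp)
  simp only [Finset.mem_insert, Finset.mem_singleton] at h1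
  rcases h1 with rfl | rfl | rfl
  · exact absurd hab (by rw [haa] at hab; exact absurd hab (degOrder_irrefl _))
  · rfl
  · rw [← hcc] at hbc; exact absurd hbc (degOrder_irrefl _)

lemma sort_triple {a b c : V} (hab : G.Adj a b) (hac : G.Adj a c) (hbc : G.Adj b c) :
    ∃ x y z : V, G.Adj x y ∧ G.Adj y z ∧ G.Adj x z ∧ DegOrder G x y ∧
      DegOrder G y z ∧ ({x, y, z} : Finset V) = {a, b, c} := by
  rcases degOrder_total G hab.ne with h1 | h1 <;>
  rcases degOrder_total G hbc.ne with h2 | h2 <;>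
  rcases degOrder_total G hac.ne with h3 | h3
  · exact ⟨a, b, c, hab, hbc, hac, h1, h2, rfl⟩
  · exact absurd h3 (degOrder_asymm (degOrder_trans h1 h2))
  · exact ⟨a, c, b, hac, hbc.symm, hab, h3, h2, by ext x; simp; tauto⟩
  · exact ⟨c, a, b, hac.symm, hab, hbc.symm, h3, h1, by ext x; simp; tauto⟩
  · exact ⟨b, a, c, hab.symm, hac, hbc, h1, h3, by ext x; simp; tauto⟩
  · exact ⟨b, c, a, hbc, hac.symm, hab.symm, h2, h3, by ext x; simp; tauto⟩
  · exact absurd h3 (degOrder_asymm (degOrder_trans h2 h1))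
  · exact ⟨c, b, a, hbc.symm, hab.symm, hac.symm, h2, h1, by ext x; simp; tauto⟩

end Aux

/-- Worst-case optimal triangle counting via degree orientation: summing, over
all oriented edges `(u,v)`, the cost `min(|N⁺(u)|, |N⁺(v)|)` of intersecting
the two out-neighbourhoods gives total time at most `√2 · IN^(3/2)`, and every
undirected triangle (3-clique) appears exactly once as a directed triangle
under the acyclic orientation. -/
theorem triangle_counting_worst_case_optimal {V : Type*} [Fintype V]
    [LinearOrder V] (G : SimpleGraph V) :
    (∑ p ∈ Finset.univ.filter
        (fun p : V × V => G.Adj p.1 p.2 ∧ DegOrder G p.1 p.2),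
        (min (outDeg G p.1) (outDeg G p.2) : ℝ)) ≤
      Real.sqrt 2 * (G.edgeFinset.card : ℝ) ^ ((3 : ℝ) / 2) ∧
    {p : V × V × V | G.Adj p.1 p.2.1 ∧ G.Adj p.2.1 p.2.2 ∧ G.Adj p.1 p.2.2 ∧
        DegOrder G p.1 p.2.1 ∧ DegOrder G p.2.1 p.2.2}.ncard =
      (G.cliqueFinset 3).card := by
  classical
  constructor
  · -- Part 1
    set m : ℕ := G.edgeFinset.card with hm
    have hsq : ∀ u : V, (outDeg G u : ℝ) ≤ Real.sqrt (2 * m) := by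
      intro u
      have h := outDeg_sq_le (G := G) u
      have h2 : ((outDeg G u : ℝ)) ^ 2 ≤ 2 * (m : ℝ) := by exact_mod_cast h
      calc (outDeg G u : ℝ) = Real.sqrt ((outDeg G u : ℝ) ^ 2) := by
            rw [Real.sqrt_sq (by positivity)]
        _ ≤ Real.sqrt (2 * m) := Real.sqrt_le_sqrt h2
    have hsum : (∑ p ∈ Finset.univ.filter
        (fun p : V × V => G.Adj p.1 p.2 ∧ DegOrder G p.1 p.2),
        (min (outDeg G p.1) (outDeg G p.2) : ℝ)) ≤
        (Finset.univ.filter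
          (fun p : V × V => G.Adj p.1 p.2 ∧ DegOrder G p.1 p.2)).card •
          Real.sqrt (2 * m) := by
      apply Finset.sum_le_card_nsmul
      intro p _
      calc (min (outDeg G p.1) (outDeg G p.2) : ℝ) ≤ (outDeg G p.1 : ℝ) := by
            exact_mod_cast min_le_left _ _
        _ ≤ Real.sqrt (2 * m) := hsq p.1
    rw [card_oriented_edges, nsmul_eq_mul] at hsum
    refine hsum.trans (le_of_eq ?_)
    rw [show (2 * (m : ℝ)) = 2 * m by norm_num, Real.sqrt_mul (by norm_num) (m : ℝ),
      show ((3 : ℝ) / 2) = 1 + 1 / 2 by norm_num,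
      Real.rpow_add' (by positivity) (by norm_num), Real.rpow_one,
      ← Real.sqrt_eq_rpow]
    ring
  · -- Part 2
    rw [show {p : V × V × V | G.Adj p.1 p.2.1 ∧ G.Adj p.2.1 p.2.2 ∧ G.Adj p.1 p.2.2 ∧
        DegOrder G p.1 p.2.1 ∧ DegOrder G p.2.1 p.2.2} =
        ↑(Finset.univ.filter (fun p : V × V × V => G.Adj p.1 p.2.1 ∧ G.Adj p.2.1 p.2.2 ∧
          G.Adj p.1 p.2.2 ∧ DegOrder G p.1 p.2.1 ∧ DegOrder G p.2.1 p.2.2)) by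
      ext p; simp]
    rw [Set.ncard_coe_finset]
    apply Finset.card_bij (fun (p : V × V × V) _ => ({p.1, p.2.1, p.2.2} : Finset V))
    · rintro ⟨a, b, c⟩ hp
      simp only [Finset.mem_filter] at hp
      obtain ⟨-, hab, hbc, hac, -, -⟩ := hp
      rw [SimpleGraph.mem_cliqueFinset_iff, SimpleGraph.is3Clique_triple_iff]
      exact ⟨hab, hac, hbc⟩
    · rintro ⟨a, b, c⟩ h1 ⟨a', b', c'⟩ h2 he
      simp only [Finset.mem_filter] at h1 h2
      obtain ⟨e1, e2, e3⟩ := triple_unique h1.2.2.2.2.1 h1.2.2.2.2.2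
        h2.2.2.2.2.1 h2.2.2.2.2.2 he
      simp [e1, e2, e3]
    · intro s hs
      rw [SimpleGraph.mem_cliqueFinset_iff, SimpleGraph.is3Clique_iff] at hs
      obtain ⟨a, b, c, hab, hac, hbc, rfl⟩ := hs
      obtain ⟨x, y, z, h1, h2, h3, h4, h5, h6⟩ := sort_triple hab hac hbc
      exact ⟨(x, y, z), by simp [h1, h2, h3, h4, h5], h6⟩
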